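/- Let d ≥ 1 and n ≥ 1 be integers, let v ∈ ℤ^d have every entry coprime to n, and let δ ∈ ℤ^d. Then L(n,v,δ) is an n-point Latin hypercube design in [0,1]^d: it has exactly n elements, and for every coordinate k ∈ {1,…,d} the map sending a point of L(n,v,δ) to its k-th coordinate is a bijection from L(n,v,δ) onto {1/(2n), 3/(2n), …, (2n−1)/(2n)}. -/

import Mathlib

open Finset

/-- Distance from a real number to the nearest integer: w(t) = min over z in ZZ of |t - z|. -/
noncomputable def nid (t : ℝ) : ℝ := ⨅ z : ℤ, |t - (z : ℝ)|

/-- Wrap-around distance on ℝ^d. -/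
noncomputable def wdist {d : ℕ} (u : Fin d → ℝ) : ℝ := Real.sqrt (∑ k, nid (u k) ^ 2)

/-- Lattice-based Latin hypercube design
L(n,v,δ) = { z + i·v/n + δ/n + 1_d/(2n) : z ∈ ℤ^d, i ∈ ℤ } ∩ [0,1]^d. -/
def LHDset (d n : ℕ) (v : Fin d → ℤ) (δ : Fin d → ℝ) : Set (Fin d → ℝ) :=
  {x | (∃ (z : Fin d → ℤ) (i : ℤ),
          x = fun k => (z k : ℝ) + (i : ℝ) * (v k : ℝ) / n + δ k / n + 1 / (2 * n)) ∧
       ∀ k, x k ∈ Set.Icc (0 : ℝ) 1}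

/-- The point of the design corresponding to the index `i`. -/
noncomputable def Pt (d n : ℕ) (v δ : Fin d → ℤ) (i : ℤ) : Fin d → ℝ :=
  fun k => (2 * (((i * v k + δ k) % (n : ℤ) : ℤ) : ℝ) + 1) / (2 * n)

lemma pt_mem {d n : ℕ} (hn : 0 < n) (v δ : Fin d → ℤ) (i : ℤ) :
    Pt d n v δ i ∈ LHDset d n v (fun k => (δ k : ℝ)) := by
  have hnR : (0:ℝ) < n := by exact_mod_cast hn
  constructor
  · refine ⟨fun k => -((i * v k + δ k) / (n:ℤ)), i, funext fun k => ?_⟩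
    have hm : (i * v k + δ k) % (n:ℤ) = i * v k + δ k - n * ((i * v k + δ k) / n) :=
      Int.emod_def _ _
    show (2 * (((i * v k + δ k) % (n : ℤ) : ℤ) : ℝ) + 1) / (2 * n) = _
    rw [hm]
    push_cast
    field_simp
    ring
  · intro k
    have h0 : (0:ℤ) ≤ (i * v k + δ k) % (n:ℤ) :=
      Int.emod_nonneg _ (by exact_mod_cast hn.ne')
    have h1 : (i * v k + δ k) % (n:ℤ) < n :=
      Int.emod_lt_of_pos _ (by exact_mod_cast hn)
    simp only [Pt, Set.mem_Icc]
    constructor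
    · apply div_nonneg _ (by positivity)
      have : (0:ℝ) ≤ (((i * v k + δ k) % (n:ℤ) : ℤ) : ℝ) := by exact_mod_cast h0
      linarith
    · rw [div_le_one (by positivity)]
      have h1' : (i * v k + δ k) % (n:ℤ) + 1 ≤ (n:ℤ) := h1
      have : (((i * v k + δ k) % (n:ℤ) : ℤ) : ℝ) + 1 ≤ (n:ℝ) := by exact_mod_cast h1'
      linarith

lemma mem_pt {d n : ℕ} (hn : 0 < n) {v δ : Fin d → ℤ} {x : Fin d → ℝ}
    (hx : x ∈ LHDset d n v (fun k => (δ k : ℝ))) : ∃ i : ℤ, x = Pt d n v δ i := by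
  obtain ⟨⟨z, i, hxe⟩, hb⟩ := hx
  have hnR : (0:ℝ) < n := by exact_mod_cast hn
  refine ⟨i, funext fun k => ?_⟩
  set m' : ℤ := n * z k + (i * v k + δ k) with hm'
  have hxk : x k = (2 * (m' : ℝ) + 1) / (2 * n) := by
    rw [hxe]
    push_cast [hm']
    field_simp
    ring
  obtain ⟨hb0, hb1⟩ := hb k
  rw [hxk] at hb0 hb1
  have h1 : (0:ℝ) ≤ 2 * (m':ℝ) + 1 := by
    have := (le_div_iff₀ (by positivity : (0:ℝ) < 2 * n)).mp hb0
    linarith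
  have h2 : 2 * (m':ℝ) + 1 ≤ 2 * n := (div_le_one (by positivity)).mp hb1
  have h1' : (0:ℤ) ≤ 2 * m' + 1 := by exact_mod_cast h1
  have h2' : 2 * m' + 1 ≤ 2 * (n:ℤ) := by exact_mod_cast h2
  have hm0 : 0 ≤ m' := by omega
  have hm1 : m' < (n:ℤ) := by omega
  have hmod : (i * v k + δ k) % (n:ℤ) = m' := by
    have h4 : m' % (n:ℤ) = (i * v k + δ k) % (n:ℤ) := by
      rw [hm', add_comm]
      simp [Int.add_mul_emod_self_left]
    rw [← h4, Int.emod_eq_of_lt hm0 hm1]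
  show x k = (2 * (((i * v k + δ k) % (n : ℤ) : ℤ) : ℝ) + 1) / (2 * n)
  rw [hmod, hxk]

lemma pt_congr {d n : ℕ} {v δ : Fin d → ℤ} {i j : ℤ} (h : (n:ℤ) ∣ i - j) :
    Pt d n v δ i = Pt d n v δ j := by
  funext k
  have heq : (i * v k + δ k) % (n:ℤ) = (j * v k + δ k) % (n:ℤ) := by
    have hd : (n:ℤ) ∣ (j * v k + δ k) - (i * v k + δ k) := by
      have he : (j * v k + δ k) - (i * v k + δ k) = -((i - j) * v k) := by ring
      rw [he]
      exact dvd_neg.mpr (h.mul_right _)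
    exact Int.modEq_iff_dvd.mpr hd
  simp only [Pt, heq]

lemma dvd_of_pt_coord_eq {d n : ℕ} {v δ : Fin d → ℤ} {i j : ℤ} (k : Fin d)
    (hn : 0 < n) (hco : IsCoprime (v k) (n : ℤ))
    (h : Pt d n v δ i k = Pt d n v δ j k) : (n:ℤ) ∣ i - j := by
  have hnR : (0:ℝ) < n := by exact_mod_cast hn
  simp only [Pt] at h
  have heq : (i * v k + δ k) % (n:ℤ) = (j * v k + δ k) % (n:ℤ) := by
    field_simp at h
    have h' : 2 * ((i * v k + δ k) % (n:ℤ)) + 1 = 2 * ((j * v k + δ k) % (n:ℤ)) + 1 := by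
      exact_mod_cast h
    omega
  have hdvd : (n:ℤ) ∣ (i - j) * v k := by
    have h5 := Int.ModEq.dvd (heq : (i * v k + δ k) ≡ (j * v k + δ k) [ZMOD (n:ℤ)])
    have h6 : (i - j) * v k = -((j * v k + δ k) - (i * v k + δ k)) := by ring
    rw [h6]
    exact dvd_neg.mpr h5
  exact hco.symm.dvd_of_dvd_mul_right hdvd

/-- L(n,v,δ) is an n-point Latin hypercube design in [0,1]^d. -/
theorem stmt_0 (d n : ℕ) (hd : 1 ≤ d) (hn : 1 ≤ n) (v δ : Fin d → ℤ)
    (hco : ∀ k, IsCoprime (v k) (n : ℤ)) :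
    (LHDset d n v (fun k => (δ k : ℝ))).ncard = n ∧
    ∀ k : Fin d, Set.BijOn (fun x : Fin d → ℝ => x k)
      (LHDset d n v (fun k => (δ k : ℝ)))
      {t : ℝ | ∃ j : ℕ, j < n ∧ t = (2 * (j : ℝ) + 1) / (2 * n)} := by
  have hn' : 0 < n := hn
  have hnZ : (0:ℤ) < n := by exact_mod_cast hn
  have hset : LHDset d n v (fun k => (δ k : ℝ)) =
      Pt d n v δ '' ↑(Finset.Ico (0:ℤ) (n:ℤ)) := by
    ext x
    constructor
    · intro hx
      obtain ⟨i, rfl⟩ := mem_pt hn' hx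
      refine ⟨i % (n:ℤ), ?_, ?_⟩
      · simp only [Finset.coe_Ico, Set.mem_Ico]
        exact ⟨Int.emod_nonneg _ hnZ.ne', Int.emod_lt_of_pos _ hnZ⟩
      · exact (pt_congr ⟨-(i / (n:ℤ)), by rw [Int.emod_def]; ring⟩)
    · rintro ⟨i, -, rfl⟩
      exact pt_mem hn' v δ i
  have hinj : Set.InjOn (Pt d n v δ) ↑(Finset.Ico (0:ℤ) (n:ℤ)) := by
    intro i hi j hj hij
    simp only [Finset.coe_Ico, Set.mem_Ico] at hi hj
    have hdvd := dvd_of_pt_coord_eq ⟨0, hd⟩ hn' (hco _) (congrFun hij ⟨0, hd⟩)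
    have h0 : i - j = 0 := Int.eq_zero_of_abs_lt_dvd hdvd (by
      rw [abs_lt]; omega)
    omega
  constructor
  · rw [hset, Set.ncard_image_of_injOn hinj, Set.ncard_coe_finset]
    rw [Int.card_Ico]
    omega
  · intro k
    refine ⟨?_, ?_, ?_⟩
    · intro x hx
      obtain ⟨i, rfl⟩ := mem_pt hn' hx
      have h0 : 0 ≤ (i * v k + δ k) % (n:ℤ) := Int.emod_nonneg _ hnZ.ne'
      have h1 : (i * v k + δ k) % (n:ℤ) < n := Int.emod_lt_of_pos _ hnZ
      refine ⟨((i * v k + δ k) % (n:ℤ)).toNat, by omega, ?_⟩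
      show Pt d n v δ i k = _
      simp only [Pt]
      have hc : ((((i * v k + δ k) % (n:ℤ)).toNat : ℕ) : ℝ)
          = (((i * v k + δ k) % (n:ℤ) : ℤ) : ℝ) := by
        exact_mod_cast Int.toNat_of_nonneg h0
      rw [hc]
    · intro x hx y hy hxy
      obtain ⟨i, rfl⟩ := mem_pt hn' hx
      obtain ⟨j, rfl⟩ := mem_pt hn' hy
      exact pt_congr (dvd_of_pt_coord_eq k hn' (hco k) hxy)
    · rintro t ⟨j, hj, rfl⟩
      obtain ⟨a, b, hab⟩ := hco k
      refine ⟨Pt d n v δ (a * ((j:ℤ) - δ k)), pt_mem hn' v δ _, ?_⟩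
      have hmod : ((a * ((j:ℤ) - δ k)) * v k + δ k) % (n:ℤ) = (j:ℤ) := by
        have h8 : (a * ((j:ℤ) - δ k)) * v k + δ k
            = (j:ℤ) + (-(b * ((j:ℤ) - δ k))) * (n:ℤ) := by
          linear_combination ((j:ℤ) - δ k) * hab
        rw [h8, Int.add_mul_emod_self_right]
        exact Int.emod_eq_of_lt (Int.ofNat_nonneg j) (by exact_mod_cast hj)
      show Pt d n v δ _ k = _
      simp only [Pt, hmod]
      push_cast
      ring
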